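/- arXiv:0809.3507 — 3 statements merged into one kernel-verified Lean document; each statement's English description precedes it below -/
import Mathlib

section
/- Fix coprime integers 0 < p < q, set r = 2^q, s = 2^p, and let S ⊆ ℚ₊ be the subsemigroup generated by 1 and a_i = r^i + s^{−i} for i ≥ 1. Then (1/(2s²))·n^{1+p/q} < |S ∩ (0,n)| < 3·n^{1+p/q} for all sufficiently large n ∈ ℕ. -/
private lemma aux_one_mem (p q : ℕ) (S : AddSubsemigroup ℚ)
    (hS : S = AddSubsemigroup.closure
      ({1} ∪ Set.range (fun i : ℕ =>
        ((2 : ℚ) ^ q) ^ (i + 1) + ((1 / 2 : ℚ) ^ p) ^ (i + 1)))) :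
    (1 : ℚ) ∈ S := by
  rw [hS]
  exact AddSubsemigroup.subset_closure (Or.inl rfl)

private lemma aux_gen_mem (p q : ℕ) (S : AddSubsemigroup ℚ)
    (hS : S = AddSubsemigroup.closure
      ({1} ∪ Set.range (fun i : ℕ =>
        ((2 : ℚ) ^ q) ^ (i + 1) + ((1 / 2 : ℚ) ^ p) ^ (i + 1)))) (j : ℕ) :
    ((2 : ℚ) ^ q) ^ (j + 1) + ((1 / 2 : ℚ) ^ p) ^ (j + 1) ∈ S := by
  rw [hS]
  exact AddSubsemigroup.subset_closure (Or.inr ⟨j, rfl⟩)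

private lemma aux_nat_mem (p q : ℕ) (S : AddSubsemigroup ℚ)
    (hS : S = AddSubsemigroup.closure
      ({1} ∪ Set.range (fun i : ℕ =>
        ((2 : ℚ) ^ q) ^ (i + 1) + ((1 / 2 : ℚ) ^ p) ^ (i + 1)))) :
    ∀ k : ℕ, 1 ≤ k → (k : ℚ) ∈ S := by
  intro k hk
  induction k with
  | zero => omega
  | succ k ih =>
    rcases Nat.lt_or_ge 1 (k+1) with h | h
    · have hk' := ih (by omega)
      have : ((k:ℚ) + 1) ∈ S := S.add_mem hk' (aux_one_mem p q S hS)
      simpa using this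
    · have : k = 0 := by omega
      subst this
      simpa using aux_one_mem p q S hS

private lemma aux_smul_mem (S : AddSubsemigroup ℚ) (x : ℚ) (hx : x ∈ S) :
    ∀ d : ℕ, 1 ≤ d → (d : ℚ) * x ∈ S := by
  intro d hd
  induction d with
  | zero => omega
  | succ d ih =>
    rcases Nat.lt_or_ge 1 (d+1) with h | h
    · have hd' := ih (by omega)
      have : ((d:ℚ) * x + x) ∈ S := S.add_mem hd' hx
      have he : ((d:ℚ)+1) * x = (d:ℚ)*x + x := by ring
      push_cast
      rw [he]
      exact this
    · have : d = 0 := by omega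
      subst this
      simpa using hx

private lemma aux_nat_ineq (A B P R d : ℕ) (hAB : A ≤ B) (hd : d < A)
    (hP : 1 ≤ P) (hR : 1 ≤ R) :
    (d * (R * B * P) + P * (A * R + 1)) * A ≤ P * A * (A * (R * B) + 1) := by
  have h1 : d * (R * B * P) + R * B * P ≤ A * (R * B * P) := by
    have : (d + 1) * (R * B * P) ≤ A * (R * B * P) :=
      Nat.mul_le_mul_right _ (by omega)
    nlinarith
  have h2 : P * (A * R) ≤ R * B * P := by
    calc P * (A * R) = A * R * P := by ring
    _ ≤ B * R * P := by
        apply Nat.mul_le_mul_right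
        exact Nat.mul_le_mul_right _ hAB
    _ = R * B * P := by ring
  nlinarith

private lemma aux_mem (p q : ℕ) (hpq : p < q) (S : AddSubsemigroup ℚ)
    (hS : S = AddSubsemigroup.closure
      ({1} ∪ Set.range (fun i : ℕ =>
        ((2 : ℚ) ^ q) ^ (i + 1) + ((1 / 2 : ℚ) ^ p) ^ (i + 1)))) :
    ∀ ℓ k : ℕ, 2^(p*ℓ) * (2^p * 2^(q*ℓ) + 1) ≤ k → ((k:ℚ) / (2:ℚ)^(p*ℓ)) ∈ S := by
  intro ℓ
  induction ℓ with
  | zero =>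
    intro k hk
    simp only [Nat.mul_zero, pow_zero, one_mul, mul_one] at hk ⊢
    rw [div_one]
    have : (1:ℕ) ≤ 2^p := Nat.one_le_two_pow
    exact aux_nat_mem p q S hS k (by omega)
  | succ ℓ ih =>
    intro k hk
    have hA : (1:ℕ) ≤ 2^p := Nat.one_le_two_pow
    set d := k % 2^p with hd
    set k' := k / 2^p with hk'def
    have hdlt : d < 2^p := Nat.mod_lt _ (by positivity)
    have hdm : 2^p * k' + d = k := Nat.div_add_mod k (2^p)
    have hk'ge : d * (2^(q*ℓ) * 2^q * 2^(p*ℓ)) + 2^(p*ℓ) * (2^p * 2^(q*ℓ) + 1) ≤ k' := by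
      rw [hk'def, Nat.le_div_iff_mul_le (by positivity)]
      calc (d * (2^(q*ℓ) * 2^q * 2^(p*ℓ)) + 2^(p*ℓ) * (2^p * 2^(q*ℓ) + 1)) * 2^p
          ≤ 2^(p*ℓ) * 2^p * (2^p * (2^(q*ℓ) * 2^q) + 1) :=
            aux_nat_ineq (2^p) (2^q) (2^(p*ℓ)) (2^(q*ℓ)) d
              (Nat.pow_le_pow_right (by norm_num) (le_of_lt hpq)) hdlt
              Nat.one_le_two_pow Nat.one_le_two_pow
        _ = 2^(p*(ℓ+1)) * (2^p * 2^(q*(ℓ+1)) + 1) := by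
            rw [show p*(ℓ+1) = p*ℓ + p from by ring, show q*(ℓ+1) = q*ℓ + q from by ring,
              pow_add, pow_add]
        _ ≤ k := hk
    set k'' := k' - d * (2^(q*ℓ) * 2^q * 2^(p*ℓ)) with hk''def
    have hk''ge : 2^(p*ℓ) * (2^p * 2^(q*ℓ) + 1) ≤ k'' := by omega
    have hsub : d * (2^(q*ℓ) * 2^q * 2^(p*ℓ)) ≤ k' := by omega
    have hmem : ((k'':ℚ) / (2:ℚ)^(p*ℓ)) ∈ S := ih k'' hk''ge
    have hcast : (k : ℚ) / (2:ℚ)^(p*(ℓ+1))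
        = (d:ℚ) * (((2:ℚ)^q)^(ℓ+1) + ((1/2:ℚ)^p)^(ℓ+1)) + (k'' : ℚ) / (2:ℚ)^(p*ℓ) := by
      have h1 : (k'' : ℚ) = (k' : ℚ) - (d:ℚ) * ((2:ℚ)^(q*ℓ) * (2:ℚ)^q * (2:ℚ)^(p*ℓ)) := by
        rw [hk''def]
        push_cast [Nat.cast_sub hsub]
        ring
      have h2 : (k:ℚ) = (2:ℚ)^p * (k':ℚ) + (d:ℚ) := by
        exact_mod_cast (congrArg (Nat.cast (R := ℚ)) hdm).symm
      rw [h2, h1,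
        show ((2:ℚ)^q)^(ℓ+1) = (2:ℚ)^(q*ℓ) * (2:ℚ)^q from by
          rw [← pow_mul, ← pow_add]; ring_nf,
        show ((1/2:ℚ)^p)^(ℓ+1) = ((2:ℚ)^(p*(ℓ+1)))⁻¹ from by
          rw [div_pow, one_pow, div_pow, one_pow, ← pow_mul, one_div],
        show (2:ℚ)^(p*(ℓ+1)) = (2:ℚ)^(p*ℓ) * (2:ℚ)^p from by
          rw [← pow_add, show p*ℓ + p = p*(ℓ+1) from by ring]]
      have hPne : ((2:ℚ)^(p*ℓ)) ≠ 0 := by positivity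
      have hAne : ((2:ℚ)^p) ≠ 0 := by positivity
      field_simp
      ring
    rw [hcast]
    rcases Nat.eq_zero_or_pos d with h0 | h1
    · rw [h0]
      push_cast
      simpa using hmem
    · exact S.add_mem (aux_smul_mem S _ (aux_gen_mem p q S hS ℓ) d h1) hmem

private lemma aux_int (p q i : ℕ) (hq : 0 < q) (S : AddSubsemigroup ℚ)
    (hS : S = AddSubsemigroup.closure
      ({1} ∪ Set.range (fun i : ℕ =>
        ((2 : ℚ) ^ q) ^ (i + 1) + ((1 / 2 : ℚ) ^ p) ^ (i + 1)))) :
    ∀ x ∈ S, 0 < x ∧ (x < ((2:ℚ)^q)^(i+1) → ∃ k : ℤ, x * (2:ℚ)^(p*i) = (k:ℚ)) := by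
  intro x hx
  rw [hS] at hx
  induction hx using AddSubsemigroup.closure_induction with
  | mem t ht =>
    rcases ht with h1 | ⟨j, rfl⟩
    · rw [Set.mem_singleton_iff] at h1; subst h1
      exact ⟨one_pos, fun _ => ⟨2^(p*i), by push_cast; ring⟩⟩
    · simp only []
      constructor
      · positivity
      · intro hlt
        have hb1 : (1:ℚ) < (2:ℚ)^q := by
          apply one_lt_pow₀ (by norm_num) (by omega)
        have h1 : ((2:ℚ)^q)^(j+1) < ((2:ℚ)^q)^(i+1) := by
          refine lt_trans ?_ hlt
          apply lt_add_of_pos_right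
          positivity
        have hj : j + 1 ≤ i := by
          have := (pow_lt_pow_iff_right₀ hb1).mp h1
          omega
        refine ⟨2^(q*(j+1)) * 2^(p*i) + 2^(p*(i-(j+1))), ?_⟩
        have e1 : ((2:ℚ)^q)^(j+1) = (2:ℚ)^(q*(j+1)) := (pow_mul 2 q (j+1)).symm
        have esum : p*(j+1) + p*(i-(j+1)) = p*i := by
          rw [← Nat.mul_add]
          congr 1
          omega
        have e2 : ((1/2:ℚ)^p)^(j+1) * (2:ℚ)^(p*i) = (2:ℚ)^(p*(i-(j+1))) := by
          rw [div_pow, one_pow, div_pow, one_pow, ← pow_mul, ← esum, pow_add]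
          field_simp
        rw [add_mul, e1, e2]
        push_cast
        ring
  | add a b ha hb iha ihb =>
    obtain ⟨hapos, haint⟩ := iha
    obtain ⟨hbpos, hbint⟩ := ihb
    refine ⟨by positivity, fun hlt => ?_⟩
    obtain ⟨ka, hka⟩ := haint (lt_trans (lt_add_of_pos_right _ hbpos) hlt)
    obtain ⟨kb, hkb⟩ := hbint (lt_trans (lt_add_of_pos_left _ hapos) hlt)
    exact ⟨ka + kb, by push_cast; rw [add_mul, hka, hkb]⟩

set_option maxHeartbeats 1600000 in
/-- **Example (n^(1+p/q) growth).** Fix coprime `0 < p < q`, `r = 2^q`, `s = 2^p`, and let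
`S ⊆ ℚ₊` be the subsemigroup generated by `1` and `aᵢ = r^i + s^{-i}` for `i ≥ 1`. Then
`(1/(2s²))·n^{1+p/q} < |S ∩ (0,n)| < 3·n^{1+p/q}` for all sufficiently large `n`. -/
theorem example_n_alpha_growth
    (p q : ℕ) (hp : 0 < p) (hpq : p < q) (hcop : Nat.Coprime p q)
    (S : AddSubsemigroup ℚ)
    (hS : S = AddSubsemigroup.closure
      ({1} ∪ Set.range (fun i : ℕ =>
        ((2 : ℚ) ^ q) ^ (i + 1) + ((1 / 2 : ℚ) ^ p) ^ (i + 1)))) :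
    ∃ N : ℕ, ∀ n : ℕ, N ≤ n →
      ((S : Set ℚ) ∩ Set.Ioo 0 (n : ℚ)).Finite ∧
      (1 / (2 * ((2 : ℝ) ^ p) ^ 2)) * (n : ℝ) ^ ((1 : ℝ) + (p : ℝ) / (q : ℝ)) <
        (((S : Set ℚ) ∩ Set.Ioo 0 (n : ℚ)).ncard : ℝ) ∧
      (((S : Set ℚ) ∩ Set.Ioo 0 (n : ℚ)).ncard : ℝ) <
        3 * (n : ℝ) ^ ((1 : ℝ) + (p : ℝ) / (q : ℝ)) := by
  refine ⟨2^q + 32, fun n hn => ?_⟩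
  have hq : 0 < q := lt_trans hp hpq
  have hb : 1 < 2^q := Nat.one_lt_two_pow (by omega)
  have hn0 : n ≠ 0 := by omega
  have hn32 : 32 ≤ n := by omega
  set i := Nat.log (2^q) n with hidef
  have hi1 : 1 ≤ i := by
    have h1 : (2^q)^1 ≤ n := by
      simpa using le_trans (Nat.le_add_right _ 32) hn
    exact (Nat.le_log_iff_pow_le hb hn0).mpr h1
  have hlow : (2^q)^i ≤ n := Nat.pow_log_le_self _ hn0
  have hhigh : n < (2^q)^(i+1) := Nat.lt_pow_succ_log_self hb n
  set ℓ := i - 1 with hldef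
  have hil : ℓ + 1 = i := by omega
  -- upper bound inclusion
  have hint := aux_int p q i hq S hS
  have hcastqi : ((2:ℝ):ℝ) = 2 := rfl
  have hsubU : (S : Set ℚ) ∩ Set.Ioo 0 (n:ℚ)
      ⊆ (fun m : ℕ => (m:ℚ)/(2:ℚ)^(p*i)) '' (Set.Ioo 0 (n * 2^(p*i))) := by
    rintro x ⟨hxS, hx0, hxn⟩
    obtain ⟨hpos, hint'⟩ := hint x hxS
    have hcast : (n:ℚ) < ((2:ℚ)^q)^(i+1) := by exact_mod_cast hhigh
    obtain ⟨k, hk⟩ := hint' (hxn.trans hcast)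
    have hk0 : 0 < k := by
      have h1 : (0:ℚ) < (k:ℚ) := by
        rw [← hk]; positivity
      exact_mod_cast h1
    have hklt : (k:ℚ) < (n:ℚ) * (2:ℚ)^(p*i) := by
      rw [← hk]
      exact mul_lt_mul_of_pos_right hxn (by positivity)
    refine ⟨k.toNat, ⟨?_, ?_⟩, ?_⟩
    · omega
    · have h2 : (k:ℚ) < (((n * 2^(p*i) : ℕ)):ℚ) := by push_cast; exact hklt
      have h3 : k < ((n * 2^(p*i) : ℕ) : ℤ) := by exact_mod_cast h2
      omega
    · show (k.toNat:ℚ)/(2:ℚ)^(p*i) = x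
      have h1 : ((k.toNat : ℕ):ℚ) = (k:ℚ) := by
        exact_mod_cast Int.toNat_of_nonneg (le_of_lt hk0)
      rw [h1, ← hk]
      field_simp
  have hfinIoo : (Set.Ioo 0 (n * 2^(p*i))).Finite := Set.finite_Ioo _ _
  have hfin : ((S:Set ℚ) ∩ Set.Ioo 0 (n:ℚ)).Finite :=
    Set.Finite.subset (hfinIoo.image _) hsubU
  have hcardU : ((S:Set ℚ) ∩ Set.Ioo 0 (n:ℚ)).ncard ≤ n * 2^(p*i) - 1 := by
    calc ((S:Set ℚ) ∩ Set.Ioo 0 (n:ℚ)).ncard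
        ≤ ((fun m : ℕ => (m:ℚ)/(2:ℚ)^(p*i)) '' (Set.Ioo 0 (n * 2^(p*i)))).ncard :=
          Set.ncard_le_ncard hsubU (hfinIoo.image _)
      _ ≤ (Set.Ioo 0 (n * 2^(p*i))).ncard := Set.ncard_image_le hfinIoo
      _ = n * 2^(p*i) - 1 := by
          rw [← Finset.coe_Ioo, Set.ncard_coe_finset, Nat.card_Ioo]
          omega
  -- lower bound inclusion
  have hmem := aux_mem p q hpq S hS
  have hsubL : (fun m : ℕ => (m:ℚ)/(2:ℚ)^(p*ℓ)) ''
      (Set.Ico (2^(p*ℓ) * (2^p * 2^(q*ℓ) + 1)) (n * 2^(p*ℓ)))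
      ⊆ (S:Set ℚ) ∩ Set.Ioo 0 (n:ℚ) := by
    rintro x ⟨m, ⟨hm1, hm2⟩, rfl⟩
    have hm0 : 0 < m := by
      have h1 : 0 < 2^(p*ℓ) * (2^p * 2^(q*ℓ) + 1) := by positivity
      omega
    refine ⟨hmem ℓ m hm1, ?_, ?_⟩
    · show (0:ℚ) < (m:ℚ)/(2:ℚ)^(p*ℓ)
      have : (0:ℚ) < (m:ℚ) := by exact_mod_cast hm0
      positivity
    · show (m:ℚ)/(2:ℚ)^(p*ℓ) < (n:ℚ)
      rw [div_lt_iff₀ (by positivity)]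
      exact_mod_cast hm2
  have hinj : Set.InjOn (fun m : ℕ => (m:ℚ)/(2:ℚ)^(p*ℓ))
      (Set.Ico (2^(p*ℓ) * (2^p * 2^(q*ℓ) + 1)) (n * 2^(p*ℓ))) := by
    intro a _ b _ hab
    have h2 : ((2:ℚ)^(p*ℓ)) ≠ 0 := by positivity
    field_simp at hab
    exact_mod_cast hab
  have hcardL : n * 2^(p*ℓ) - 2^(p*ℓ) * (2^p * 2^(q*ℓ) + 1)
      ≤ ((S:Set ℚ) ∩ Set.Ioo 0 (n:ℚ)).ncard := by
    calc n * 2^(p*ℓ) - 2^(p*ℓ) * (2^p * 2^(q*ℓ) + 1)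
        = (Set.Ico (2^(p*ℓ) * (2^p * 2^(q*ℓ) + 1)) (n * 2^(p*ℓ))).ncard := by
          rw [← Finset.coe_Ico, Set.ncard_coe_finset, Nat.card_Ico]
      _ = ((fun m : ℕ => (m:ℚ)/(2:ℚ)^(p*ℓ)) ''
            (Set.Ico (2^(p*ℓ) * (2^p * 2^(q*ℓ) + 1)) (n * 2^(p*ℓ)))).ncard :=
          (Set.ncard_image_of_injOn hinj).symm
      _ ≤ _ := Set.ncard_le_ncard hsubL hfin
  set count := ((S:Set ℚ) ∩ Set.Ioo 0 (n:ℚ)).ncard with hcount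
  clear_value count
  -- real setup
  set α : ℝ := (p:ℝ)/(q:ℝ) with hadef
  clear_value α
  have hqR : (0:ℝ) < q := by exact_mod_cast hq
  have hα0 : 0 < α := by
    rw [hadef]
    apply div_pos (by exact_mod_cast hp) hqR
  have hα1 : α < 1 := by
    rw [hadef]
    exact (div_lt_one hqR).mpr (by exact_mod_cast hpq)
  have hnpos : (0:ℝ) < n := by
    have : 0 < n := by omega
    exact_mod_cast this
  have hn32R : (32:ℝ) ≤ n := by exact_mod_cast hn32
  have key : ∀ a b : ℕ, a * p = b * q → ((2:ℝ)^a)^α = (2:ℝ)^b := by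
    intro a b hab
    rw [← Real.rpow_natCast 2 a, ← Real.rpow_natCast 2 b, ← Real.rpow_mul (by norm_num)]
    congr 1
    rw [hadef]
    field_simp
    exact_mod_cast (hab.trans (Nat.mul_comm b q))
  have hsplit : (n:ℝ)^((1:ℝ)+α) = (n:ℝ) * (n:ℝ)^α := by
    rw [Real.rpow_add hnpos, Real.rpow_one]
  have hnlowR : (2:ℝ)^(q*i) ≤ n := by
    have h1 : ((2:ℝ)^q)^i ≤ n := by exact_mod_cast hlow
    rwa [← pow_mul] at h1
  have hnhighR : (n:ℝ) < (2:ℝ)^(q*(i+1)) := by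
    have h1 : (n:ℝ) < ((2:ℝ)^q)^(i+1) := by exact_mod_cast hhigh
    rwa [← pow_mul] at h1
  have hqi : q*i = q*ℓ + q := by rw [← hil]; ring
  have hpi2 : p*(i+1) = p + p + p*ℓ := by rw [← hil]; ring
  have hpi1 : p*i = p*ℓ + p := by rw [← hil]; ring
  have hDhalf : 2 * ((2:ℝ)^p * (2:ℝ)^(q*ℓ)) ≤ n := by
    calc 2 * ((2:ℝ)^p * (2:ℝ)^(q*ℓ)) = (2:ℝ)^(1 + p + q*ℓ) := by
          rw [pow_add, pow_add, pow_one]; ring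
    _ ≤ (2:ℝ)^(q*i) := by
        apply pow_le_pow_right₀ (by norm_num)
        omega
    _ ≤ n := hnlowR
  -- cast the lower cardinality bound
  have hCM : 2^(p*ℓ) * (2^p * 2^(q*ℓ) + 1) ≤ n * 2^(p*ℓ) := by
    have h3 : 2^p * 2^(q*ℓ) + 1 ≤ n := by
      have e : 2^(q*ℓ) * 2^q ≤ n := by
        have h4 : (2:ℕ)^(q*ℓ) * 2^q = (2^q)^i := by
          rw [← pow_mul, ← pow_add, hqi]
        omega
      have h4 : (2:ℕ)^(p+1) ≤ 2^q := Nat.pow_le_pow_right (by norm_num) (by omega)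
      have h5 : (1:ℕ) ≤ 2^p * 2^(q*ℓ) := Nat.one_le_iff_ne_zero.mpr (by positivity)
      calc 2^p * 2^(q*ℓ) + 1 ≤ 2*(2^p*2^(q*ℓ)) := by omega
      _ = 2^(q*ℓ) * (2 * 2^p) := by ring
      _ = 2^(q*ℓ) * 2^(p+1) := by rw [pow_succ]; ring
      _ ≤ 2^(q*ℓ) * 2^q := Nat.mul_le_mul_left _ h4
      _ ≤ n := e
    calc 2^(p*ℓ) * (2^p * 2^(q*ℓ) + 1) = (2^p * 2^(q*ℓ) + 1) * 2^(p*ℓ) := by ring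
    _ ≤ n * 2^(p*ℓ) := Nat.mul_le_mul_right _ h3
  have hEle : (n:ℝ)*(2:ℝ)^(p*ℓ) - (2:ℝ)^(p*ℓ)*((2:ℝ)^p*(2:ℝ)^(q*ℓ)+1) ≤ (count:ℝ) := by
    have h1 : ((n * 2^(p*ℓ) - 2^(p*ℓ) * (2^p * 2^(q*ℓ) + 1) : ℕ) : ℝ) ≤ (count:ℝ) :=
      Nat.cast_le.mpr hcardL
    push_cast [Nat.cast_sub hCM] at h1
    linarith
  -- main lower inequality
  have hmainL : (n:ℝ)^((1:ℝ)+α)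
      < (2*((2:ℝ)^p)^2) * ((n:ℝ)*(2:ℝ)^(p*ℓ) - (2:ℝ)^(p*ℓ)*((2:ℝ)^p*(2:ℝ)^(q*ℓ)+1)) := by
    rw [hsplit]
    have hexp : (2:ℝ)^p*(2:ℝ)^p*(2:ℝ)^(p*ℓ) = (2:ℝ)^(p*(i+1)) := by
      rw [← pow_add, ← pow_add, hpi2]
    have hApos : (0:ℝ) < (2:ℝ)^p := by positivity
    have hDpos : (0:ℝ) ≤ (2:ℝ)^p * (2:ℝ)^(q*ℓ) := by positivity
    rcases le_or_gt (2*(2^q)^i) n with hcase | hcase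
    · -- n large in its block
      have hnα : (n:ℝ)^α < (2:ℝ)^(p*(i+1)) := by
        calc (n:ℝ)^α < ((2:ℝ)^(q*(i+1)))^α :=
              Real.rpow_lt_rpow (le_of_lt hnpos) hnhighR hα0
        _ = _ := key _ _ (by ring)
      have hcaseR : 2*(2:ℝ)^(q*i) ≤ n := by
        have h1 : ((2*(2^q)^i : ℕ):ℝ) ≤ n := by exact_mod_cast hcase
        push_cast at h1
        rwa [← pow_mul] at h1
      have hD4 : 4*((2:ℝ)^p*(2:ℝ)^(q*ℓ)) ≤ n := by
        calc 4*((2:ℝ)^p*(2:ℝ)^(q*ℓ)) = 2*(2:ℝ)^(1+p+q*ℓ) := by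
              rw [pow_add, pow_add, pow_one]; ring
        _ ≤ 2*(2:ℝ)^(q*i) := by
            have h2 : (2:ℝ)^(1+p+q*ℓ) ≤ (2:ℝ)^(q*i) := by
              apply pow_le_pow_right₀ (by norm_num)
              omega
            linarith
        _ ≤ n := hcaseR
      have hrhs : (2*((2:ℝ)^p)^2) * ((n:ℝ)*(2:ℝ)^(p*ℓ) - (2:ℝ)^(p*ℓ)*((2:ℝ)^p*(2:ℝ)^(q*ℓ)+1))
          = 2*(2:ℝ)^(p*(i+1)) * ((n:ℝ) - (2:ℝ)^p*(2:ℝ)^(q*ℓ) - 1) := by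
        rw [← hexp]; ring
      rw [hrhs]
      have h5 : (n:ℝ)*(n:ℝ)^α < (n:ℝ)*(2:ℝ)^(p*(i+1)) :=
        mul_lt_mul_of_pos_left hnα hnpos
      have hP : (0:ℝ) < (2:ℝ)^(p*(i+1)) := by positivity
      have h6 : (0:ℝ) ≤ (2:ℝ)^(p*(i+1)) * ((n:ℝ) - 2*((2:ℝ)^p*(2:ℝ)^(q*ℓ)) - 2) := by
        apply mul_nonneg hP.le
        linarith
      nlinarith [h5, h6]
    · -- n small in its block
      have hcaseR : (n:ℝ) < 2*(2:ℝ)^(q*i) := by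
        have h1 : (n:ℝ) < ((2*(2^q)^i : ℕ):ℝ) := by exact_mod_cast hcase
        push_cast at h1
        rwa [← pow_mul] at h1
      have hnα : (n:ℝ)^α < (2:ℝ)^α * (2:ℝ)^(p*i) := by
        calc (n:ℝ)^α < (2*(2:ℝ)^(q*i))^α :=
              Real.rpow_lt_rpow (le_of_lt hnpos) hcaseR hα0
        _ = (2:ℝ)^α * ((2:ℝ)^(q*i))^α := Real.mul_rpow (by norm_num) (by positivity)
        _ = (2:ℝ)^α * (2:ℝ)^(p*i) := by rw [key (q*i) (p*i) (by ring)]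
      have hrhs : (2*((2:ℝ)^p)^2) * ((n:ℝ)*(2:ℝ)^(p*ℓ) - (2:ℝ)^(p*ℓ)*((2:ℝ)^p*(2:ℝ)^(q*ℓ)+1))
          = (2*(2:ℝ)^p*((n:ℝ) - (2:ℝ)^p*(2:ℝ)^(q*ℓ) - 1))*(2:ℝ)^(p*i) := by
        rw [show (2:ℝ)^(p*i) = (2:ℝ)^(p*ℓ)*(2:ℝ)^p from by rw [← pow_add, hpi1]]
        ring
      rw [hrhs]
      have h2α2 : (2:ℝ)^α < 2 := by
        have h1 := Real.rpow_lt_rpow_of_exponent_lt (show (1:ℝ)<2 by norm_num) hα1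
        rwa [Real.rpow_one] at h1
      have h2αpos : (0:ℝ) < (2:ℝ)^α := Real.rpow_pos_of_pos (by norm_num) α
      have hstep : (n:ℝ)*((2:ℝ)^α) ≤ 2*(2:ℝ)^p*((n:ℝ) - (2:ℝ)^p*(2:ℝ)^(q*ℓ) - 1) := by
        rcases Nat.lt_or_ge p 2 with hplt | hp2
        · have hp1' : p = 1 := by omega
          have hA : (2:ℝ)^p = 2 := by rw [hp1']; norm_num
          have hq2 : 2 ≤ q := by omega
          have hαhalf : α ≤ 1/2 := by
            rw [hadef, hp1', div_le_div_iff₀ hqR (by norm_num)]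
            push_cast
            have : (2:ℝ) ≤ q := by exact_mod_cast hq2
            linarith
          have h2α : (2:ℝ)^α ≤ 3/2 := by
            have hle : (2:ℝ)^α ≤ (2:ℝ)^((1:ℝ)/2) :=
              Real.rpow_le_rpow_of_exponent_le (by norm_num) hαhalf
            have hsq : (2:ℝ)^((1:ℝ)/2) = Real.sqrt 2 := (Real.sqrt_eq_rpow 2).symm
            have h32 : Real.sqrt 2 ≤ 3/2 := by
              rw [show (3/2:ℝ) = Real.sqrt ((3/2)^2) from by rw [Real.sqrt_sq (by norm_num)]]
              apply Real.sqrt_le_sqrt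
              norm_num
            rw [hsq] at hle
            linarith
          have hmul : (n:ℝ)*((2:ℝ)^α) ≤ (n:ℝ)*(3/2) :=
            mul_le_mul_of_nonneg_left h2α hnpos.le
          rw [hA]
          nlinarith [hDhalf, hn32R, hmul, hDpos]
        · have hA4 : (4:ℝ) ≤ (2:ℝ)^p := by
            calc (4:ℝ) = 2^2 := by norm_num
            _ ≤ 2^p := pow_le_pow_right₀ (by norm_num) hp2
          have hA2n : 2*(2:ℝ)^p ≤ n := by
            calc 2*(2:ℝ)^p = (2:ℝ)^(p+1) := by rw [pow_succ]; ring
            _ ≤ (2:ℝ)^(q*i) := by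
                apply pow_le_pow_right₀ (by norm_num)
                omega
            _ ≤ n := hnlowR
          have hmul : (n:ℝ)*((2:ℝ)^α) ≤ (n:ℝ)*2 :=
            mul_le_mul_of_nonneg_left h2α2.le hnpos.le
          nlinarith [mul_le_mul_of_nonneg_left hDhalf hApos.le, hmul, hA4, hA2n, hn32R,
            mul_nonneg (sub_nonneg.mpr hA4) (sub_nonneg.mpr (show (2:ℝ) ≤ n by linarith))]
      calc (n:ℝ)*(n:ℝ)^α < (n:ℝ)*((2:ℝ)^α*(2:ℝ)^(p*i)) :=
            mul_lt_mul_of_pos_left hnα hnpos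
      _ = ((n:ℝ)*(2:ℝ)^α)*(2:ℝ)^(p*i) := by ring
      _ ≤ (2*(2:ℝ)^p*((n:ℝ) - (2:ℝ)^p*(2:ℝ)^(q*ℓ) - 1))*(2:ℝ)^(p*i) :=
            mul_le_mul_of_nonneg_right hstep (by positivity)
  refine ⟨hfin, ?_, ?_⟩
  · -- lower bound
    have hGpos : (0:ℝ) < 2*((2:ℝ)^p)^2 := by positivity
    calc (1/(2*((2:ℝ)^p)^2)) * (n:ℝ)^((1:ℝ)+α)
        < (1/(2*((2:ℝ)^p)^2)) * ((2*((2:ℝ)^p)^2) *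
            ((n:ℝ)*(2:ℝ)^(p*ℓ) - (2:ℝ)^(p*ℓ)*((2:ℝ)^p*(2:ℝ)^(q*ℓ)+1))) := by
          apply mul_lt_mul_of_pos_left hmainL (by positivity)
    _ = (n:ℝ)*(2:ℝ)^(p*ℓ) - (2:ℝ)^(p*ℓ)*((2:ℝ)^p*(2:ℝ)^(q*ℓ)+1) := by
          field_simp
    _ ≤ (count:ℝ) := hEle
  · -- upper bound
    have hnα' : (2:ℝ)^(p*i) ≤ (n:ℝ)^α := by
      calc (2:ℝ)^(p*i) = ((2:ℝ)^(q*i))^α := (key (q*i) (p*i) (by ring)).symm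
      _ ≤ (n:ℝ)^α := Real.rpow_le_rpow (by positivity) hnlowR (le_of_lt hα0)
    have hM1 : 1 ≤ n * 2^(p*i) := Nat.one_le_iff_ne_zero.mpr (Nat.mul_ne_zero hn0 (by positivity))
    have h1 : (count:ℝ) ≤ ((n*2^(p*i) - 1 : ℕ):ℝ) := Nat.cast_le.mpr hcardU
    push_cast [Nat.cast_sub hM1] at h1
    have hrp : (0:ℝ) < (n:ℝ)^((1:ℝ)+α) := Real.rpow_pos_of_pos hnpos _
    calc (count:ℝ) ≤ (n:ℝ)*(2:ℝ)^(p*i) - 1 := h1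
    _ < (n:ℝ)*(2:ℝ)^(p*i) := by linarith
    _ ≤ (n:ℝ)*(n:ℝ)^α := mul_le_mul_of_nonneg_left hnα' hnpos.le
    _ = (n:ℝ)^((1:ℝ)+α) := hsplit.symm
    _ < 3*(n:ℝ)^((1:ℝ)+α) := by linarith
end

section
/- Let S ⊆ ℚ₊ be the subsemigroup generated by 1 and a_i = 10^{2^{i−1}} + 2^{−i} for i ≥ 1. Then (1/4)·n·log₁₀(n) < |S ∩ (0,n)| < 2·n·log₁₀(n) for all sufficiently large n ∈ ℕ; i.e., |S ∩ (0,n)| grows at the rate n·log n. -/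
open Finset in
lemma aux_sum_mem (S : AddSubsemigroup ℚ) {A : Finset ℕ} (hA : A.Nonempty)
    {f : ℕ → ℚ} (hf : ∀ i ∈ A, f i ∈ S) : ∑ i ∈ A, f i ∈ S := by
  induction hA using Finset.Nonempty.cons_induction with
  | singleton i => simpa using hf i (by simp)
  | cons i A hiA hA ih =>
    rw [Finset.sum_cons]
    exact S.add_mem (hf i (by simp)) (ih fun j hj => hf j (by simp [hj]))

lemma aux_add_nat (S : AddSubsemigroup ℚ) {x : ℚ} (hx : x ∈ S) (h1 : (1:ℚ) ∈ S) (m : ℕ) :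
    x + m ∈ S := by
  induction m with
  | zero => simpa using hx
  | succ m ih => push_cast; rw [← add_assoc]; exact S.add_mem ih h1

open Finset in
lemma aux_two_pow_sum_lt (K : ℕ) : ∑ i ∈ range K, 2 ^ i < 2 ^ K := by
  induction K with
  | zero => simp
  | succ K ih => rw [Finset.sum_range_succ, pow_succ]; omega

open Finset in
lemma aux_Smax (K : ℕ) : ∑ i ∈ range (K + 1), (10:ℕ) ^ (2 ^ i) ≤ 2 * 10 ^ (2 ^ K) := by
  induction K with
  | zero => simp
  | succ K ih =>
    rw [Finset.sum_range_succ]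
    have h1 : (10:ℕ) ^ (2 ^ (K+1)) = 10 ^ (2^K) * 10 ^ (2^K) := by
      rw [← pow_add]; congr 1; omega
    have h2 : 2 ≤ (10:ℕ) ^ (2 ^ K) := by
      calc 2 ≤ 10^1 := by norm_num
      _ ≤ 10 ^ (2^K) := Nat.pow_le_pow_right (by norm_num) (Nat.one_le_two_pow)
    nlinarith [ih]

open Finset in
lemma aux_rev_sum {K : ℕ} {A : Finset ℕ} (hA : A ⊆ range K) :
    ∑ i ∈ A, 2 ^ (K - 1 - i) = ∑ j ∈ A.image (fun i => K - 1 - i), 2 ^ j := by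
  rw [Finset.sum_image]
  intro i hi j hj h
  have := Finset.mem_range.1 (hA hi); have := Finset.mem_range.1 (hA hj); simp only at h; omega

open Finset in
lemma aux_N_lt {K : ℕ} {A : Finset ℕ} (hA : A ⊆ range K) :
    ∑ i ∈ A, 2 ^ (K - 1 - i) < 2 ^ K := by
  rw [aux_rev_sum hA]
  calc ∑ j ∈ A.image (fun i => K - 1 - i), 2 ^ j
      ≤ ∑ j ∈ range K, 2 ^ j := by
        apply Finset.sum_le_sum_of_subset
        intro j hj
        obtain ⟨i, hi, rfl⟩ := Finset.mem_image.1 hj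
        have := Finset.mem_range.1 (hA hi)
        exact Finset.mem_range.2 (by omega)
    _ < 2 ^ K := aux_two_pow_sum_lt K

open Finset in
lemma aux_N_inj {K : ℕ} {A B : Finset ℕ} (hA : A ⊆ range K) (hB : B ⊆ range K)
    (h : ∑ i ∈ A, 2 ^ (K - 1 - i) = ∑ i ∈ B, (2:ℕ) ^ (K - 1 - i)) : A = B := by
  rw [aux_rev_sum hA, aux_rev_sum hB] at h
  have himg := Finset.geomSum_injective (le_refl 2) h
  have hback : ∀ C : Finset ℕ, C ⊆ range K →
      (C.image (fun i => K-1-i)).image (fun i => K-1-i) = C := by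
    intro C hC
    rw [Finset.image_image]
    rw [show ((fun i => K-1-i) ∘ (fun i => K-1-i)) = fun i => K-1-(K-1-i) from rfl]
    have : ∀ i ∈ C, K-1-(K-1-i) = i := fun i hi => by
      have := Finset.mem_range.1 (hC hi); omega
    calc C.image (fun i => K-1-(K-1-i)) = C.image id := Finset.image_congr this
    _ = C := Finset.image_id
  rw [← hback A hA, ← hback B hB, himg]

open Finset in
lemma aux_frac_eq {K : ℕ} {A : Finset ℕ} (hA : A ⊆ range K) :
    ∑ i ∈ A, (1/2 : ℚ) ^ (i+1) = ((∑ i ∈ A, 2 ^ (K - 1 - i) : ℕ) : ℚ) / 2 ^ K := by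
  push_cast
  rw [Finset.sum_div]
  refine Finset.sum_congr rfl fun i hi => ?_
  have hiK := Finset.mem_range.1 (hA hi)
  have h2 : ((2:ℚ) ^ (K-1-i)) * 2 ^ (i+1) = 2 ^ K := by
    rw [← pow_add]; congr 1; omega
  rw [div_pow, one_pow, eq_div_iff (by positivity)]
  field_simp
  linarith [h2]

open Finset in
lemma aux_decomp {K : ℕ} {A : Finset ℕ} (hA : A ⊆ range K) :
    ∑ i ∈ A, ((10 : ℚ) ^ (2 ^ i) + (1 / 2 : ℚ) ^ (i + 1)) =
      ((∑ i ∈ A, 10 ^ (2 ^ i) : ℕ) : ℚ) + ((∑ i ∈ A, 2 ^ (K - 1 - i) : ℕ) : ℚ) / 2 ^ K := by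
  rw [Finset.sum_add_distrib, aux_frac_eq hA]
  push_cast
  ring

lemma aux_upper_pred (n k : ℕ) (hk : ∀ i : ℕ, (10:ℕ) ^ (2 ^ i) < n → i ≤ k) :
    ∀ x ∈ AddSubsemigroup.closure
      ({1} ∪ Set.range (fun i : ℕ => (10 : ℚ) ^ (2 ^ i) + (1 / 2 : ℚ) ^ (i + 1))),
      0 < x ∧ ((n:ℚ) ≤ x ∨ ∃ z : ℤ, x * 2 ^ (k+1) = (z : ℚ)) := by
  intro x hx
  induction hx using AddSubsemigroup.closure_induction with
  | mem y hy =>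
    rcases hy with hy | ⟨i, rfl⟩
    · rw [Set.mem_singleton_iff] at hy
      subst hy
      exact ⟨one_pos, Or.inr ⟨2 ^ (k+1), by push_cast; ring⟩⟩
    · constructor
      · positivity
      · by_cases h : (10:ℕ) ^ (2 ^ i) < n
        · right
          have hik := hk i h
          refine ⟨10 ^ (2 ^ i) * 2 ^ (k+1) + 2 ^ (k - i), ?_⟩
          have h2 : ((2:ℚ) ^ (k - i)) * 2 ^ (i+1) = 2 ^ (k+1) := by
            rw [← pow_add]; congr 1; omega
          push_cast
          field_simp
          have h3 : ((1:ℚ)/2)^(i+1) * 2^(i+1) = 1 := by rw [← mul_pow]; norm_num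
          linear_combination (-(1/2:ℚ)^(i+1)) * h2 + (2:ℚ)^(k-i) * h3
        · left
          push_neg at h
          have h10 : (n : ℚ) ≤ (10:ℚ) ^ (2 ^ i) := by
            calc (n:ℚ) ≤ ((10:ℕ) ^ (2^i) : ℕ) := by exact_mod_cast h
            _ = (10:ℚ) ^ (2^i) := by push_cast; ring
          have : (0:ℚ) < (1/2) ^ (i+1) := by positivity
          linarith
  | add x y hx hy ihx ihy =>
    obtain ⟨hx0, hx1⟩ := ihx
    obtain ⟨hy0, hy1⟩ := ihy
    refine ⟨by linarith, ?_⟩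
    rcases hx1 with h | ⟨z, hz⟩
    · left; linarith
    rcases hy1 with h | ⟨w, hw⟩
    · left; linarith
    · right; exact ⟨z + w, by push_cast; rw [add_mul, hz, hw]⟩

set_option maxHeartbeats 1000000 in
/-- **Example (n·log n growth).** Let `S ⊆ ℚ₊` be the subsemigroup generated by `1` and
`aᵢ = 10^{2^{i−1}} + 2^{−i}` for `i ≥ 1`. Then
`(1/4)·n·log₁₀ n < |S ∩ (0,n)| < 2·n·log₁₀ n` for all sufficiently large `n`. -/
theorem example_n_log_n_growth
    (S : AddSubsemigroup ℚ)
    (hS : S = AddSubsemigroup.closure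
      ({1} ∪ Set.range (fun i : ℕ =>
        (10 : ℚ) ^ (2 ^ i) + (1 / 2 : ℚ) ^ (i + 1)))) :
    ∃ N : ℕ, ∀ n : ℕ, N ≤ n →
      ((S : Set ℚ) ∩ Set.Ioo 0 (n : ℚ)).Finite ∧
      (1 / 4 : ℝ) * n * Real.logb 10 n < (((S : Set ℚ) ∩ Set.Ioo 0 (n : ℚ)).ncard : ℝ) ∧
      (((S : Set ℚ) ∩ Set.Ioo 0 (n : ℚ)).ncard : ℝ) < 2 * n * Real.logb 10 n := by
  refine ⟨10000, fun n hn => ?_⟩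
  set E : Set ℚ := (S : Set ℚ) ∩ Set.Ioo 0 (n : ℚ) with hE
  -- ### Upper bound setup
  set L : ℕ := Nat.log 10 n with hLdef
  set k : ℕ := Nat.log 2 L with hkdef
  have hL1 : 1 ≤ L := Nat.log_pos (by norm_num) (by omega)
  have h2kL : 2 ^ k ≤ L := Nat.pow_log_le_self 2 (by omega)
  have hkprop : ∀ i : ℕ, (10:ℕ) ^ (2 ^ i) < n → i ≤ k := by
    intro i hi
    have h1 : 2 ^ i ≤ L := (Nat.le_log_iff_pow_le (by norm_num) (by omega)).2 hi.le
    exact (Nat.le_log_iff_pow_le (by norm_num) (by omega)).2 h1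
  set m : ℕ := n * 2 ^ (k+1) with hmdef
  have hm1 : 1 ≤ m := by
    have h2p : 0 < 2 ^ (k+1) := by positivity
    have hn0 : 0 < n := by omega
    have := Nat.mul_pos hn0 h2p
    omega
  have hpred := aux_upper_pred n k hkprop
  have hsub : E ⊆ ↑((Finset.Ioo (0:ℤ) (m:ℤ)).image (fun z : ℤ => (z:ℚ) / 2 ^ (k+1))) := by
    rintro x ⟨hxS, hx0, hxn⟩
    rw [hS] at hxS
    obtain ⟨-, h⟩ := hpred x hxS
    rcases h with h | ⟨z, hz⟩
    · linarith
    have h2pos : (0:ℚ) < 2 ^ (k+1) := by positivity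
    refine Finset.mem_coe.2 (Finset.mem_image.2 ⟨z, ?_, ?_⟩)
    · rw [Finset.mem_Ioo]
      constructor
      · have : (0:ℚ) < (z:ℚ) := by rw [← hz]; positivity
        exact_mod_cast this
      · have : (z:ℚ) < (m:ℚ) := by
          rw [← hz, hmdef]
          push_cast
          nlinarith
        exact_mod_cast this
    · rw [← hz]
      field_simp
  have hfin : E.Finite := Set.Finite.subset (Finset.finite_toSet _) hsub
  have hcard_up : E.ncard ≤ m - 1 := by
    calc E.ncard
        ≤ ((Finset.Ioo (0:ℤ) (m:ℤ)).image (fun z : ℤ => (z:ℚ) / 2 ^ (k+1)) : Finset ℚ).card := by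
          rw [← Set.ncard_coe_finset]
          exact Set.ncard_le_ncard hsub (Finset.finite_toSet _)
      _ ≤ (Finset.Ioo (0:ℤ) (m:ℤ)).card := Finset.card_image_le
      _ = m - 1 := by rw [Int.card_Ioo]; omega
  have hLlogb : (L : ℝ) ≤ Real.logb 10 n := by
    have := Real.natLog_le_logb n 10
    rwa [← hLdef] at this
  have hupper : (E.ncard : ℝ) < 2 * n * Real.logb 10 n := by
    have h1 : (E.ncard : ℝ) ≤ (m:ℝ) - 1 := by
      have hcast : ((m - 1 : ℕ) : ℝ) = (m:ℝ) - 1 := by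
        push_cast [Nat.cast_sub hm1]; ring
      calc (E.ncard : ℝ) ≤ ((m - 1 : ℕ) : ℝ) := by exact_mod_cast hcard_up
        _ = (m:ℝ) - 1 := hcast
    have h2 : (m:ℝ) ≤ 2 * n * Real.logb 10 n := by
      have h2k : ((2:ℝ) ^ k) ≤ (L:ℝ) := by exact_mod_cast h2kL
      have hn0 : (0:ℝ) ≤ (n:ℝ) := by positivity
      calc (m:ℝ) = 2 * n * 2 ^ k := by rw [hmdef]; push_cast; ring
        _ ≤ 2 * n * (L:ℝ) := by nlinarith
        _ ≤ 2 * n * Real.logb 10 n := by nlinarith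
    linarith
  -- ### Lower bound setup
  set L' : ℕ := Nat.log 10 (n / 4) with hL'def
  set e : ℕ := Nat.log 2 L' with hedef
  have hn4 : 10 ≤ n / 4 := by omega
  have hL'1 : 1 ≤ L' := Nat.log_pos (by norm_num) hn4
  have h2e : 2 ^ e ≤ L' := Nat.pow_log_le_self 2 (by omega)
  have h10e : (10:ℕ) ^ (2 ^ e) ≤ n / 4 := by
    calc (10:ℕ) ^ (2 ^ e) ≤ 10 ^ L' := Nat.pow_le_pow_right (by norm_num) h2e
      _ ≤ n / 4 := Nat.pow_log_le_self 10 (by omega)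
  set Smax : ℕ := ∑ i ∈ Finset.range (e+1), (10:ℕ) ^ (2 ^ i) with hSmaxdef
  have hSmax : Smax ≤ n / 2 := by
    have h1 : Smax ≤ 2 * 10 ^ (2 ^ e) := aux_Smax e
    omega
  have hK'L' : L' + 1 ≤ 2 ^ (e+1) := Nat.lt_pow_succ_log_self (by norm_num) L'
  set φ : Finset ℕ × ℕ → ℚ :=
    fun p => (p.2 : ℚ) + ∑ i ∈ p.1, ((10 : ℚ) ^ (2 ^ i) + (1 / 2 : ℚ) ^ (i + 1)) with hφdef
  set D : Finset (Finset ℕ × ℕ) :=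
    ((Finset.range (e+1)).powerset.erase ∅) ×ˢ Finset.range (n - Smax) with hDdef
  have hDmem : ∀ p ∈ D, p.1 ⊆ Finset.range (e+1) ∧ p.1.Nonempty ∧ p.2 < n - Smax := by
    intro p hp
    rw [hDdef, Finset.mem_product, Finset.mem_erase, Finset.mem_powerset, Finset.mem_range] at hp
    exact ⟨hp.1.2, Finset.nonempty_iff_ne_empty.2 hp.1.1, hp.2⟩
  have hval : ∀ p ∈ D, φ p =
      ((p.2 + ∑ i ∈ p.1, (10:ℕ) ^ (2 ^ i) : ℕ) : ℚ)
        + ((∑ i ∈ p.1, 2 ^ ((e+1) - 1 - i) : ℕ) : ℚ) / 2 ^ (e+1) := by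
    intro p hp
    obtain ⟨hsub', hne, hlt⟩ := hDmem p hp
    have hφp : φ p = (p.2 : ℚ)
        + ∑ i ∈ p.1, ((10 : ℚ) ^ (2 ^ i) + (1 / 2 : ℚ) ^ (i + 1)) := rfl
    rw [hφp, aux_decomp hsub']
    push_cast
    ring
  have hφmem : ∀ p ∈ D, φ p ∈ E := by
    intro p hp
    obtain ⟨hsub', hne, hlt⟩ := hDmem p hp
    have hgm : ∀ i ∈ p.1, (10 : ℚ) ^ (2 ^ i) + (1 / 2 : ℚ) ^ (i + 1) ∈
        AddSubsemigroup.closure ({1} ∪ Set.range (fun i : ℕ =>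
          (10 : ℚ) ^ (2 ^ i) + (1 / 2 : ℚ) ^ (i + 1))) :=
      fun i _ => AddSubsemigroup.subset_closure (Or.inr ⟨i, rfl⟩)
    have h1T : (1:ℚ) ∈ AddSubsemigroup.closure ({1} ∪ Set.range (fun i : ℕ =>
        (10 : ℚ) ^ (2 ^ i) + (1 / 2 : ℚ) ^ (i + 1))) :=
      AddSubsemigroup.subset_closure (Or.inl rfl)
    have hmemS : φ p ∈ S := by
      rw [hS]
      have hφp : φ p = (p.2 : ℚ)
          + ∑ i ∈ p.1, ((10 : ℚ) ^ (2 ^ i) + (1 / 2 : ℚ) ^ (i + 1)) := rfl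
      rw [hφp, add_comm]
      exact aux_add_nat _ (aux_sum_mem _ hne hgm) h1T p.2
    refine ⟨hmemS, ?_, ?_⟩
    · rw [hval p hp]
      have h1le : 1 ≤ p.2 + ∑ i ∈ p.1, (10:ℕ) ^ (2 ^ i) := by
        obtain ⟨i0, hi0⟩ := hne
        have hone : 1 ≤ (10:ℕ) ^ (2 ^ i0) := Nat.one_le_pow _ _ (by norm_num)
        have hs : (10:ℕ) ^ (2 ^ i0) ≤ ∑ i ∈ p.1, (10:ℕ) ^ (2 ^ i) :=
          Finset.single_le_sum (f := fun i => (10:ℕ) ^ (2 ^ i)) (fun i _ => Nat.zero_le _) hi0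
        omega
      have h1le' : (1:ℚ) ≤ ((p.2 + ∑ i ∈ p.1, (10:ℕ) ^ (2 ^ i) : ℕ) : ℚ) := by
        exact_mod_cast h1le
      have hfr : (0:ℚ) ≤ ((∑ i ∈ p.1, 2 ^ ((e+1) - 1 - i) : ℕ) : ℚ) / 2 ^ (e+1) := by
        positivity
      linarith
    · rw [hval p hp]
      have hNlt : (∑ i ∈ p.1, 2 ^ ((e+1) - 1 - i) : ℕ) < 2 ^ (e+1) := aux_N_lt hsub'
      have hfrac : ((∑ i ∈ p.1, 2 ^ ((e+1) - 1 - i) : ℕ) : ℚ) / 2 ^ (e+1) < 1 := by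
        rw [div_lt_one (by positivity)]
        exact_mod_cast hNlt
      have hsA : ∑ i ∈ p.1, (10:ℕ) ^ (2 ^ i) ≤ Smax := Finset.sum_le_sum_of_subset hsub'
      have hint : p.2 + ∑ i ∈ p.1, (10:ℕ) ^ (2 ^ i) + 1 ≤ n := by omega
      have hint' : ((p.2 + ∑ i ∈ p.1, (10:ℕ) ^ (2 ^ i) : ℕ) : ℚ) + 1 ≤ (n:ℚ) := by
        exact_mod_cast hint
      linarith
  have hinj : Set.InjOn φ ↑D := by
    rintro p hp q hq hpq
    rw [Finset.mem_coe] at hp hq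
    obtain ⟨hpsub, hpne, hplt⟩ := hDmem p hp
    obtain ⟨hqsub, hqne, hqlt⟩ := hDmem q hq
    rw [hval p hp, hval q hq] at hpq
    set a1 : ℕ := p.2 + ∑ i ∈ p.1, (10:ℕ) ^ (2 ^ i) with ha1
    set a2 : ℕ := q.2 + ∑ i ∈ q.1, (10:ℕ) ^ (2 ^ i) with ha2
    set N1 : ℕ := ∑ i ∈ p.1, 2 ^ ((e+1) - 1 - i) with hN1
    set N2 : ℕ := ∑ i ∈ q.1, 2 ^ ((e+1) - 1 - i) with hN2
    have hNlt1 : N1 < 2 ^ (e+1) := aux_N_lt hpsub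
    have hNlt2 : N2 < 2 ^ (e+1) := aux_N_lt hqsub
    have h2pos : (0:ℚ) < 2 ^ (e+1) := by positivity
    have hclear : ∀ a N : ℕ, ((a:ℚ) + (N:ℚ) / 2 ^ (e+1)) * 2 ^ (e+1)
        = ((a * 2 ^ (e+1) + N : ℕ) : ℚ) := by
      intro a N
      push_cast
      field_simp
    have hmulQ : ((a1 * 2 ^ (e+1) + N1 : ℕ) : ℚ) = ((a2 * 2 ^ (e+1) + N2 : ℕ) : ℚ) := by
      rw [← hclear, ← hclear, hpq]
    have hnat : a1 * 2 ^ (e+1) + N1 = a2 * 2 ^ (e+1) + N2 := by exact_mod_cast hmulQ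
    have hmod1 : (a1 * 2 ^ (e+1) + N1) % 2 ^ (e+1) = N1 % 2 ^ (e+1) := by
      rw [Nat.add_comm]; exact Nat.add_mul_mod_self_right _ _ _
    have hmod2 : (a2 * 2 ^ (e+1) + N2) % 2 ^ (e+1) = N2 % 2 ^ (e+1) := by
      rw [Nat.add_comm]; exact Nat.add_mul_mod_self_right _ _ _
    have hNeq : N1 = N2 := by
      rw [← Nat.mod_eq_of_lt hNlt1, ← Nat.mod_eq_of_lt hNlt2, ← hmod1, ← hmod2, hnat]
    have haeq : a1 = a2 := by
      have h2p : 0 < 2 ^ (e+1) := by positivity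
      have : a1 * 2 ^ (e+1) = a2 * 2 ^ (e+1) := by omega
      exact Nat.eq_of_mul_eq_mul_right h2p this
    have hAB : p.1 = q.1 := aux_N_inj hpsub hqsub (by rw [← hN1, ← hN2]; exact hNeq)
    have hm2 : p.2 = q.2 := by
      rw [ha1, ha2, hAB] at haeq
      omega
    exact Prod.ext hAB hm2
  have hsubF : ↑(D.image φ) ⊆ E := by
    intro x hx
    rw [Finset.coe_image] at hx
    obtain ⟨p, hp, rfl⟩ := hx
    exact hφmem p hp
  have hcard_lo : (2 ^ (e+1) - 1) * (n - Smax) ≤ E.ncard := by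
    have h1 : (D.image φ).card = D.card := Finset.card_image_of_injOn hinj
    have h2 : D.card = (2 ^ (e+1) - 1) * (n - Smax) := by
      rw [hDdef, Finset.card_product, Finset.card_range,
        Finset.card_erase_of_mem (Finset.empty_mem_powerset _), Finset.card_powerset,
        Finset.card_range]
    calc (2 ^ (e+1) - 1) * (n - Smax) = (D.image φ).card := by rw [h1, h2]
      _ = (↑(D.image φ) : Set ℚ).ncard := (Set.ncard_coe_finset _).symm
      _ ≤ E.ncard := Set.ncard_le_ncard hsubF hfin
  -- ### Lower bound real estimates
  have hlog_lt : Real.logb 10 n < (L' : ℝ) + 2 := by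
    have hq : n / 4 < 10 ^ (L' + 1) := Nat.lt_pow_succ_log_self (by norm_num) (n / 4)
    have hp1 : 1 ≤ (10:ℕ) ^ (L' + 1) := Nat.one_le_pow _ _ (by norm_num)
    have hnat : n < 10 ^ (L' + 2) := by
      have h10 : (10:ℕ) ^ (L' + 2) = 10 ^ (L' + 1) * 10 := by rw [pow_succ]
      omega
    have hreal : (n:ℝ) < (10:ℝ) ^ (L' + 2) := by exact_mod_cast hnat
    calc Real.logb 10 n < Real.logb 10 ((10:ℝ) ^ (L' + 2)) :=
          Real.logb_lt_logb (by norm_num) (by positivity) hreal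
      _ = (L' : ℝ) + 2 := by
          rw [Real.logb_pow, Real.logb_self_eq_one (by norm_num)]
          push_cast; ring
  have hlog_ge4 : (4:ℝ) ≤ Real.logb 10 n := by
    have h4L : 4 ≤ L := by
      have h104 : (10:ℕ) ^ 4 ≤ n := by
        calc (10:ℕ) ^ 4 = 10000 := by norm_num
        _ ≤ n := hn
      exact (Nat.le_log_iff_pow_le (by norm_num) (by omega)).2 h104
    have : (4:ℝ) ≤ (L:ℝ) := by exact_mod_cast h4L
    linarith
  have hlower : (1 / 4 : ℝ) * n * Real.logb 10 n < (E.ncard : ℝ) := by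
    have ha : (L' : ℝ) ≤ ((2 ^ (e+1) - 1 : ℕ) : ℝ) := by
      have : L' ≤ 2 ^ (e+1) - 1 := by omega
      exact_mod_cast this
    have hb : (n:ℝ) / 2 ≤ ((n - Smax : ℕ) : ℝ) := by
      have h1 : n ≤ 2 * (n - Smax) := by omega
      have h1' : (n:ℝ) ≤ 2 * ((n - Smax : ℕ) : ℝ) := by exact_mod_cast h1
      linarith
    have hcard'' : ((2 ^ (e+1) - 1 : ℕ) : ℝ) * ((n - Smax : ℕ) : ℝ) ≤ (E.ncard : ℝ) := by
      rw [← Nat.cast_mul]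
      exact_mod_cast hcard_lo
    have hn0 : (0:ℝ) < (n:ℝ) := by
      have : 0 < n := by omega
      exact_mod_cast this
    have hL'0 : (0:ℝ) ≤ (L' : ℝ) := by positivity
    have hL'big : Real.logb 10 n - 2 < (L' : ℝ) := by linarith
    have s1 : (1 / 4 : ℝ) * n * Real.logb 10 n ≤ (Real.logb 10 n - 2) * ((n:ℝ) / 2) := by
      nlinarith
    have s2 : (Real.logb 10 n - 2) * ((n:ℝ) / 2) < (L' : ℝ) * ((n:ℝ) / 2) := by
      apply mul_lt_mul_of_pos_right hL'big
      positivity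
    have s3 : (L' : ℝ) * ((n:ℝ) / 2) ≤ ((2 ^ (e+1) - 1 : ℕ) : ℝ) * ((n - Smax : ℕ) : ℝ) :=
      mul_le_mul ha hb (by positivity) (le_trans hL'0 ha)
    linarith
  exact ⟨hfin, hlower, hupper⟩
end

section
/- Let R be the localization of k[x,y]/(y² − x³) at (x,y), embedded in V = k[t]_{(t)} via x ↦ t², y ↦ t³, and let ν be (1/2) times the t-adic valuation restricted to R. Then S^R(ν) = {1, 3/2, 2, 5/2, 3, 7/2, …} = {m/2 : m ∈ ℤ, m ≥ 2}, s₀ = 1, and |S^R(ν) ∩ (0, n)| = 2(n−1) = P_R(n) − 1 for all positive integers n, where P_R(n) = 2n − 1 is the Hilbert polynomial of R. -/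
lemma cusp_aux (k : Type*) [Field k] (a b : ℕ) :
    (MvPolynomial.aeval ![Polynomial.X ^ 2, Polynomial.X ^ 3] :
      MvPolynomial (Fin 2) k →ₐ[k] Polynomial k)
      (MvPolynomial.X 0 ^ a * MvPolynomial.X 1 ^ b) = Polynomial.X ^ (2*a+3*b) := by
  simp [map_mul, map_pow, ← pow_mul, ← pow_add, mul_comm]

/-- **Example.** Let `R` be the localization of `k[x,y]/(y² − x³)` at `(x,y)`, embedded into
`k[t]_(t)` via `x ↦ t², y ↦ t³`, and let `ν` be `1/2` times the `t`-adic valuation. Since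
`k[x,y]/(y²−x³) ≅ k[t²,t³]` via the map `φ = aeval (t², t³)` (whose kernel is `(y²−x³)`), and
elements outside `(x,y)` have value `0`, the value semigroup `S^R(ν)` is the set of values
`ν(f) = ord_t(φ f)/2` for `f ∈ (x,y)` with `φ f ≠ 0`. Then
`S^R(ν) = {m/2 : m ∈ ℤ, m ≥ 2}`, the smallest element is `s₀ = 1`, and
`|S^R(ν) ∩ (0,n)| = 2(n−1) = P_R(n) − 1` for all `n ≥ 1`, where `P_R(n) = 2n − 1` is the
Hilbert polynomial of `R`. -/
theorem cusp_value_semigroup (k : Type*) [Field k]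
    (φ : MvPolynomial (Fin 2) k →ₐ[k] Polynomial k)
    (hφ : φ = MvPolynomial.aeval ![Polynomial.X ^ 2, Polynomial.X ^ 3])
    (ν : MvPolynomial (Fin 2) k → ℚ)
    (hν : ∀ f, ν f = ((φ f).natTrailingDegree : ℚ) / 2)
    (S : Set ℚ)
    (hS : S = {γ : ℚ | ∃ f ∈ Ideal.span
      ({MvPolynomial.X 0, MvPolynomial.X 1} : Set (MvPolynomial (Fin 2) k)),
      φ f ≠ 0 ∧ ν f = γ}) :
    S = {γ : ℚ | ∃ m : ℕ, 2 ≤ m ∧ γ = (m : ℚ) / 2} ∧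
    ((1 : ℚ) ∈ S ∧ ∀ x ∈ S, 1 ≤ x) ∧
    ∀ n : ℕ, 1 ≤ n →
      (S ∩ Set.Ioo 0 (n : ℚ)).encard = ((2 * (n - 1) : ℕ) : ℕ∞) ∧
      (2 * (n - 1) : ℕ) = (2 * n - 1) - 1 := by
  have hSeq : S = {γ : ℚ | ∃ m : ℕ, 2 ≤ m ∧ γ = (m : ℚ) / 2} := by
    subst hS hφ
    ext γ
    constructor
    · rintro ⟨f, hf, hf0, rfl⟩
      rw [hν]
      obtain ⟨u, v, huv⟩ := Ideal.mem_span_pair.mp hf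
      set Φ := (MvPolynomial.aeval ![Polynomial.X ^ 2, Polynomial.X ^ 3] :
        MvPolynomial (Fin 2) k →ₐ[k] Polynomial k)
      have hX0 : Φ (MvPolynomial.X 0) = Polynomial.X ^ 2 := by simp [Φ]
      have hX1 : Φ (MvPolynomial.X 1) = Polynomial.X ^ 3 := by simp [Φ]
      have hfact : Φ f = Polynomial.X ^ 2 * (Φ u + Polynomial.X * Φ v) := by
        rw [← huv]; rw [map_add, map_mul, map_mul, hX0, hX1]; ring
      have hp : (Φ u + Polynomial.X * Φ v) ≠ 0 := by
        intro h; apply hf0; rw [hfact, h, mul_zero]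
      have hd : (Φ f).natTrailingDegree = 2 + (Φ u + Polynomial.X * Φ v).natTrailingDegree := by
        rw [hfact, Polynomial.natTrailingDegree_mul (pow_ne_zero _ Polynomial.X_ne_zero) hp,
          Polynomial.natTrailingDegree_X_pow]
      exact ⟨2 + (Φ u + Polynomial.X * Φ v).natTrailingDegree, by omega, by rw [hd]⟩
    · rintro ⟨m, hm, rfl⟩
      rcases Nat.even_or_odd m with ⟨a, ha⟩ | ⟨a, ha⟩
      · have ha1 : 1 ≤ a := by omega
        refine ⟨MvPolynomial.X 0 ^ a * MvPolynomial.X 1 ^ 0, ?_, ?_, ?_⟩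
        · rw [pow_zero, mul_one]
          exact Ideal.pow_mem_of_mem _ (Ideal.subset_span (by simp)) a ha1
        · rw [cusp_aux]
          exact pow_ne_zero _ Polynomial.X_ne_zero
        · rw [hν, cusp_aux, Polynomial.natTrailingDegree_X_pow]
          have h2 : 2 * a + 3 * 0 = m := by omega
          rw [h2]
      · have ha1 : 1 ≤ a := by omega
        refine ⟨MvPolynomial.X 0 ^ (a - 1) * MvPolynomial.X 1 ^ 1, ?_, ?_, ?_⟩
        · rw [pow_one]
          exact Ideal.mul_mem_left _ _ (Ideal.subset_span (by simp))
        · rw [cusp_aux]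
          exact pow_ne_zero _ Polynomial.X_ne_zero
        · rw [hν, cusp_aux, Polynomial.natTrailingDegree_X_pow]
          have : 2 * (a - 1) + 3 * 1 = m := by omega
          rw [this]
  refine ⟨hSeq, ⟨?_, ?_⟩, ?_⟩
  · rw [hSeq]; exact ⟨2, le_refl 2, by norm_num⟩
  · rw [hSeq]; rintro x ⟨m, hm, rfl⟩
    have : (2 : ℚ) ≤ (m : ℚ) := by exact_mod_cast hm
    linarith
  · intro n hn
    refine ⟨?_, by omega⟩
    have hset : S ∩ Set.Ioo 0 (n : ℚ) =
        ↑((Finset.Icc 2 (2 * n - 1)).image (fun m : ℕ => (m : ℚ) / 2)) := by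
      ext x
      simp only [hSeq, Set.mem_inter_iff, Set.mem_setOf_eq, Set.mem_Ioo, Finset.coe_image,
        Set.mem_image, Finset.mem_coe, Finset.mem_Icc]
      constructor
      · rintro ⟨⟨m, hm, rfl⟩, h0, hlt⟩
        have : (m : ℚ) < 2 * n := by linarith
        have hmn : m < 2 * n := by exact_mod_cast this
        exact ⟨m, ⟨hm, by omega⟩, rfl⟩
      · rintro ⟨m, ⟨hm2, hmn⟩, rfl⟩
        have h2 : (2 : ℚ) ≤ (m : ℚ) := by exact_mod_cast hm2
        have hlt : (m : ℚ) < 2 * n := by exact_mod_cast (by omega : m < 2 * n)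
        exact ⟨⟨m, hm2, rfl⟩, by linarith, by linarith⟩
    rw [hset, Set.encard_coe_eq_coe_finsetCard,
      Finset.card_image_of_injective _ (fun a b h => by
        field_simp at h; exact_mod_cast h),
      Nat.card_Icc]
    norm_cast
    omega
end
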